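/- Let $\Bbbk$ be a field and $\nu = (\nu_1,\nu_2,\nu_3,\nu_4) \in \mathbb{N}^4$ with $\nu_1+\nu_4 \geq \nu_2+\nu_3$, and let $(r_1,r_2)$ satisfy $r_1+r_2 = \nu_2+\nu_3$, $r_1 \leq \nu_1$, $r_2 \leq \nu_4$, and suppose $\nu_1 \le \nu_2 \le \nu_3$. Then the representation $M = M(1,0,0,0)^{\oplus \nu_1 - r_1} \oplus M(0,0,0,1)^{\oplus \nu_4 - r_2} \oplus M(0,1,0,1)^{\oplus \nu_2 - r_1} \oplus M(0,0,1,1)^{\oplus \nu_3 - r_1} \oplus M(1,1,1,1)^{\oplus r_1}$ of the $2\times 2$ commutative grid has dimension vector $\nu$, and satisfies $\mathrm{rank}\begin{pmatrix} f_{12} \\ f_{13} \end{pmatrix} = r_1$ and $\mathrm{rank}\begin{pmatrix} f_{24} & -f_{34} \end{pmatrix} = r_2$. -/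

import Mathlib

/-- A finite-dimensional representation of the commutative `2 × 2` grid bound quiver. -/
structure GridRep (𝕜 : Type) [Field 𝕜] : Type 1 where
  V1 : Type
  V2 : Type
  V3 : Type
  V4 : Type
  [g1 : AddCommGroup V1]
  [g2 : AddCommGroup V2]
  [g3 : AddCommGroup V3]
  [g4 : AddCommGroup V4]
  [m1 : Module 𝕜 V1]
  [m2 : Module 𝕜 V2]
  [m3 : Module 𝕜 V3]
  [m4 : Module 𝕜 V4]
  [fd1 : FiniteDimensional 𝕜 V1]
  [fd2 : FiniteDimensional 𝕜 V2]
  [fd3 : FiniteDimensional 𝕜 V3]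
  [fd4 : FiniteDimensional 𝕜 V4]
  f12 : V1 →ₗ[𝕜] V2
  f13 : V1 →ₗ[𝕜] V3
  f24 : V2 →ₗ[𝕜] V4
  f34 : V3 →ₗ[𝕜] V4
  comm : f24 ∘ₗ f12 = f34 ∘ₗ f13

attribute [instance] GridRep.g1 GridRep.g2 GridRep.g3 GridRep.g4
  GridRep.m1 GridRep.m2 GridRep.m3 GridRep.m4
  GridRep.fd1 GridRep.fd2 GridRep.fd3 GridRep.fd4

variable {𝕜 : Type} [Field 𝕜]

/-- An isomorphism of grid representations. -/
structure GridIso (A B : GridRep 𝕜) : Type where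
  e1 : A.V1 ≃ₗ[𝕜] B.V1
  e2 : A.V2 ≃ₗ[𝕜] B.V2
  e3 : A.V3 ≃ₗ[𝕜] B.V3
  e4 : A.V4 ≃ₗ[𝕜] B.V4
  c12 : e2.toLinearMap ∘ₗ A.f12 = B.f12 ∘ₗ e1.toLinearMap
  c13 : e3.toLinearMap ∘ₗ A.f13 = B.f13 ∘ₗ e1.toLinearMap
  c24 : e4.toLinearMap ∘ₗ A.f24 = B.f24 ∘ₗ e2.toLinearMap
  c34 : e4.toLinearMap ∘ₗ A.f34 = B.f34 ∘ₗ e3.toLinearMap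

/-- Direct sum of two grid representations. -/
def GridRep.dsum (A B : GridRep 𝕜) : GridRep 𝕜 where
  V1 := A.V1 × B.V1
  V2 := A.V2 × B.V2
  V3 := A.V3 × B.V3
  V4 := A.V4 × B.V4
  f12 := A.f12.prodMap B.f12
  f13 := A.f13.prodMap B.f13
  f24 := A.f24.prodMap B.f24
  f34 := A.f34.prodMap B.f34
  comm := by
    apply LinearMap.ext
    intro x
    have hA := LinearMap.congr_fun A.comm x.1
    have hB := LinearMap.congr_fun B.comm x.2
    simp only [LinearMap.comp_apply, LinearMap.prodMap_apply] at *
    exact Prod.ext hA hB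

/-- The zero representation predicate. -/
def GridRep.IsZero (A : GridRep 𝕜) : Prop :=
  Subsingleton A.V1 ∧ Subsingleton A.V2 ∧ Subsingleton A.V3 ∧ Subsingleton A.V4

/-- Indecomposability of a grid representation. -/
def GridRep.Indec (R : GridRep 𝕜) : Prop :=
  ¬ R.IsZero ∧ ∀ A B : GridRep 𝕜, Nonempty (GridIso R (A.dsum B)) → A.IsZero ∨ B.IsZero

/-- The "identity where possible" linear map `𝕜^a → 𝕜^b`. -/
def indMap (𝕜 : Type) [Field 𝕜] (a b : ℕ) : (Fin a → 𝕜) →ₗ[𝕜] (Fin b → 𝕜) where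
  toFun v := fun i => if h : (i : ℕ) < a then v ⟨i, h⟩ else 0
  map_add' u v := by funext i; by_cases h : (i : ℕ) < a <;> simp [h]
  map_smul' c v := by funext i; by_cases h : (i : ℕ) < a <;> simp [h]

@[simp] lemma indMap_apply (a b : ℕ) (v : Fin a → 𝕜) (i : Fin b) :
    indMap 𝕜 a b v i = if h : (i : ℕ) < a then v ⟨i, h⟩ else 0 := rfl

/-- The indicator representation `M(a,b,c,d)` (dimensions in `{0,1}` in practice), with
identity maps where possible and zero maps otherwise. -/
def M (𝕜 : Type) [Field 𝕜] (a b c d : ℕ)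
    (h : ∀ x : ℕ, x < a → x < d → (x < b ↔ x < c)) : GridRep 𝕜 where
  V1 := Fin a → 𝕜
  V2 := Fin b → 𝕜
  V3 := Fin c → 𝕜
  V4 := Fin d → 𝕜
  f12 := indMap 𝕜 a b
  f13 := indMap 𝕜 a c
  f24 := indMap 𝕜 b d
  f34 := indMap 𝕜 c d
  comm := by
    refine LinearMap.ext fun v => funext fun i => ?_
    have hd := i.isLt
    simp only [LinearMap.comp_apply, indMap_apply]
    by_cases ha : (i : ℕ) < a
    · have hbc := h i ha hd
      by_cases hb : (i : ℕ) < b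
      · have hc : (i : ℕ) < c := hbc.mp hb
        rw [dif_pos hb, dif_pos hc]
      · have hc : ¬ (i : ℕ) < c := fun hc' => hb (hbc.mpr hc')
        rw [dif_neg hb, dif_neg hc]
    · by_cases hb : (i : ℕ) < b <;> by_cases hc : (i : ℕ) < c <;>
        simp [hb, hc, ha]

/-- The `n`-fold direct sum (direct power) of a grid representation. -/
def GridRep.pow (R : GridRep 𝕜) (n : ℕ) : GridRep 𝕜 where
  V1 := Fin n → R.V1
  V2 := Fin n → R.V2
  V3 := Fin n → R.V3
  V4 := Fin n → R.V4
  f12 := R.f12.compLeft (Fin n)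
  f13 := R.f13.compLeft (Fin n)
  f24 := R.f24.compLeft (Fin n)
  f34 := R.f34.compLeft (Fin n)
  comm := by
    refine LinearMap.ext fun v => funext fun i => ?_
    have := LinearMap.congr_fun R.comm (v i)
    simpa using this

lemma indMap_one_one_eq_id : indMap 𝕜 1 1 = LinearMap.id := by
  apply LinearMap.ext; intro v; funext i
  have h : (i : ℕ) < 1 := i.isLt
  simp only [indMap_apply, dif_pos h, LinearMap.id_coe, id_eq]

lemma compLeft_indMap_one_one (n : ℕ) (v : Fin n → Fin 1 → 𝕜) :
    (indMap 𝕜 1 1).compLeft (Fin n) v = v := by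
  funext i; simp [LinearMap.compLeft, indMap_one_one_eq_id]

lemma indMap_zero_left (b : ℕ) : indMap 𝕜 0 b = 0 := by
  apply LinearMap.ext; intro v; funext i
  simp [indMap_apply]

lemma compLeft_indMap_zero_left (b m : ℕ) (v : Fin m → Fin 0 → 𝕜) :
    (indMap 𝕜 0 b).compLeft (Fin m) v = 0 := by
  funext i; simp [LinearMap.compLeft, indMap_zero_left]

lemma aux_rank1 {V W : Type} [AddCommGroup V] [Module 𝕜 V] [FiniteDimensional 𝕜 V]
    [AddCommGroup W] [Module 𝕜 W]
    (F : V →ₗ[𝕜] W) (n : ℕ) (π : V →ₗ[𝕜] (Fin n → Fin 1 → 𝕜))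
    (h : LinearMap.ker F = LinearMap.ker π) (hs : Function.Surjective π) :
    Module.finrank 𝕜 (LinearMap.range F) = n := by
  have h1 := LinearMap.finrank_range_add_finrank_ker F
  have h2 := LinearMap.finrank_range_add_finrank_ker π
  have h3 : LinearMap.range π = ⊤ := LinearMap.range_eq_top.mpr hs
  have h4 : Module.finrank 𝕜 (Fin n → Fin 1 → 𝕜) = n := by
    simp [Module.finrank_pi_fintype]
  rw [h3] at h2
  rw [finrank_top] at h2
  rw [h4] at h2
  rw [h] at h1
  omega

lemma aux_rank2 {V W : Type} [AddCommGroup V] [Module 𝕜 V]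
    [AddCommGroup W] [Module 𝕜 W] [FiniteDimensional 𝕜 W]
    (F : V →ₗ[𝕜] W) (n r : ℕ) (ρ : W →ₗ[𝕜] (Fin n → Fin 1 → 𝕜))
    (h : LinearMap.range F = LinearMap.ker ρ) (hs : Function.Surjective ρ)
    (harith : Module.finrank 𝕜 W = n + r) :
    Module.finrank 𝕜 (LinearMap.range F) = r := by
  have h2 := LinearMap.finrank_range_add_finrank_ker ρ
  have h3 : LinearMap.range ρ = ⊤ := LinearMap.range_eq_top.mpr hs
  have h4 : Module.finrank 𝕜 (Fin n → Fin 1 → 𝕜) = n := by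
    simp [Module.finrank_pi_fintype]
  rw [h3, finrank_top, h4] at h2
  rw [h]
  omega

set_option maxHeartbeats 2000000 in
/-- In the regime `ν₁ + ν₄ ≥ ν₂ + ν₃`, `ν₁ ≤ ν₂ ≤ ν₃`, for an admissible rank pair
`(r₁, r₂)`, the representation
`M(1,0,0,0)^{ν₁-r₁} ⊕ M(0,0,0,1)^{ν₄-r₂} ⊕ M(0,1,0,1)^{ν₂-r₁} ⊕ M(0,0,1,1)^{ν₃-r₁} ⊕ M(1,1,1,1)^{r₁}`
has dimension vector `ν` and satisfies `rank (f₁₂; f₁₃) = r₁`, `rank (f₂₄, -f₃₄) = r₂`. -/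
theorem stmt15 (𝕜 : Type) [Field 𝕜] (ν₁ ν₂ ν₃ ν₄ r₁ r₂ : ℕ)
    (hgeq : ν₂ + ν₃ ≤ ν₁ + ν₄) (hsum : r₁ + r₂ = ν₂ + ν₃)
    (hr₁ : r₁ ≤ ν₁) (hr₂ : r₂ ≤ ν₄) (h12 : ν₁ ≤ ν₂) (h23 : ν₂ ≤ ν₃) :
    ∀ R : GridRep 𝕜,
      R = ((M 𝕜 1 0 0 0 (by intro x hx hd; omega)).pow (ν₁ - r₁)).dsum
        (((M 𝕜 0 0 0 1 (by intro x hx hd; omega)).pow (ν₄ - r₂)).dsum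
          (((M 𝕜 0 1 0 1 (by intro x hx hd; omega)).pow (ν₂ - r₁)).dsum
            (((M 𝕜 0 0 1 1 (by intro x hx hd; omega)).pow (ν₃ - r₁)).dsum
              ((M 𝕜 1 1 1 1 (by intro x hx hd; omega)).pow r₁)))) →
      (Module.finrank 𝕜 R.V1 = ν₁ ∧ Module.finrank 𝕜 R.V2 = ν₂ ∧
        Module.finrank 𝕜 R.V3 = ν₃ ∧ Module.finrank 𝕜 R.V4 = ν₄) ∧
      Module.finrank 𝕜 (LinearMap.range (LinearMap.prod R.f12 R.f13)) = r₁ ∧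
      Module.finrank 𝕜 (LinearMap.range (LinearMap.coprod R.f24 (-R.f34))) = r₂ := by
  intro R hR
  subst hR
  refine ⟨⟨?_, ?_, ?_, ?_⟩, ?_, ?_⟩
  · show Module.finrank 𝕜 ((Fin (ν₁-r₁) → Fin 1 → 𝕜) × ((Fin (ν₄-r₂) → Fin 0 → 𝕜) ×
      ((Fin (ν₂-r₁) → Fin 0 → 𝕜) × ((Fin (ν₃-r₁) → Fin 0 → 𝕜) × (Fin r₁ → Fin 1 → 𝕜))))) = ν₁
    simp [Module.finrank_prod, Module.finrank_pi_fintype]; omega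
  · show Module.finrank 𝕜 ((Fin (ν₁-r₁) → Fin 0 → 𝕜) × ((Fin (ν₄-r₂) → Fin 0 → 𝕜) ×
      ((Fin (ν₂-r₁) → Fin 1 → 𝕜) × ((Fin (ν₃-r₁) → Fin 0 → 𝕜) × (Fin r₁ → Fin 1 → 𝕜))))) = ν₂
    simp [Module.finrank_prod, Module.finrank_pi_fintype]; omega
  · show Module.finrank 𝕜 ((Fin (ν₁-r₁) → Fin 0 → 𝕜) × ((Fin (ν₄-r₂) → Fin 0 → 𝕜) ×
      ((Fin (ν₂-r₁) → Fin 0 → 𝕜) × ((Fin (ν₃-r₁) → Fin 1 → 𝕜) × (Fin r₁ → Fin 1 → 𝕜))))) = ν₃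
    simp [Module.finrank_prod, Module.finrank_pi_fintype]; omega
  · show Module.finrank 𝕜 ((Fin (ν₁-r₁) → Fin 0 → 𝕜) × ((Fin (ν₄-r₂) → Fin 1 → 𝕜) ×
      ((Fin (ν₂-r₁) → Fin 1 → 𝕜) × ((Fin (ν₃-r₁) → Fin 1 → 𝕜) × (Fin r₁ → Fin 1 → 𝕜))))) = ν₄
    simp [Module.finrank_prod, Module.finrank_pi_fintype]; omega
  · refine aux_rank1 _ r₁
      ⟨⟨fun x => x.2.2.2.2, fun _ _ => rfl⟩, fun _ _ => rfl⟩ ?_ ?_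
    · ext x
      rw [LinearMap.mem_ker, LinearMap.mem_ker]
      obtain ⟨x1, x2, x3, x4, x5⟩ := x
      change _ ↔ x5 = 0
      constructor
      · intro h
        funext i j
        obtain rfl : j = 0 := Subsingleton.elim _ _
        have := congrFun (congrFun (congrArg (fun p => p.1.2.2.2.2) h) i) 0
        exact this
      · rintro rfl
        obtain rfl : x2 = 0 := Subsingleton.elim (α := Fin (ν₄ - r₂) → Fin 0 → 𝕜) _ _
        obtain rfl : x3 = 0 := Subsingleton.elim (α := Fin (ν₂ - r₁) → Fin 0 → 𝕜) _ _
        obtain rfl : x4 = 0 := Subsingleton.elim (α := Fin (ν₃ - r₁) → Fin 0 → 𝕜) _ _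
        show (((indMap 𝕜 1 0).compLeft (Fin (ν₁ - r₁)) x1, (indMap 𝕜 0 0).compLeft (Fin (ν₄ - r₂)) 0,
          (indMap 𝕜 0 1).compLeft (Fin (ν₂ - r₁)) 0, (indMap 𝕜 0 0).compLeft (Fin (ν₃ - r₁)) 0,
          (indMap 𝕜 1 1).compLeft (Fin r₁) 0),
          ((indMap 𝕜 1 0).compLeft (Fin (ν₁ - r₁)) x1, (indMap 𝕜 0 0).compLeft (Fin (ν₄ - r₂)) 0,
          (indMap 𝕜 0 0).compLeft (Fin (ν₂ - r₁)) 0, (indMap 𝕜 0 1).compLeft (Fin (ν₃ - r₁)) 0,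
          (indMap 𝕜 1 1).compLeft (Fin r₁) 0)) = 0
        simp only [map_zero]
        rw [Subsingleton.elim ((indMap 𝕜 1 0).compLeft (Fin (ν₁ - r₁)) x1) 0]
        rfl
    · intro y
      exact ⟨⟨0, 0, 0, 0, y⟩, rfl⟩
  · refine aux_rank2 _ (ν₄ - r₂) r₂
      ⟨⟨fun y => y.2.1, fun _ _ => rfl⟩, fun _ _ => rfl⟩ ?_ ?_ ?_
    · apply le_antisymm
      · rintro y ⟨x, rfl⟩
        obtain ⟨⟨a1, a2, a3, a4, a5⟩, ⟨b1, b2, b3, b4, b5⟩⟩ := x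
        obtain rfl : a2 = 0 := Subsingleton.elim (α := Fin (ν₄ - r₂) → Fin 0 → 𝕜) _ _
        obtain rfl : b2 = 0 := Subsingleton.elim (α := Fin (ν₄ - r₂) → Fin 0 → 𝕜) _ _
        rw [LinearMap.mem_ker]
        show (indMap 𝕜 0 1).compLeft (Fin (ν₄ - r₂)) 0 + -((indMap 𝕜 0 1).compLeft (Fin (ν₄ - r₂)) 0) = 0
        simp only [map_zero, neg_zero, add_zero]
      · intro y hy
        simp only [LinearMap.mem_ker, LinearMap.coe_mk, AddHom.coe_mk] at hy
        obtain ⟨y1, y2, y3, y4, y5⟩ := y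
        change y2 = 0 at hy
        subst hy
        refine ⟨⟨⟨0, 0, y3, 0, y5⟩, ⟨0, 0, 0, -y4, 0⟩⟩, ?_⟩
        show ((indMap 𝕜 0 0).compLeft (Fin (ν₁ - r₁)) 0 + -((indMap 𝕜 0 0).compLeft (Fin (ν₁ - r₁)) 0),
          (indMap 𝕜 0 1).compLeft (Fin (ν₄ - r₂)) 0 + -((indMap 𝕜 0 1).compLeft (Fin (ν₄ - r₂)) 0),
          (indMap 𝕜 1 1).compLeft (Fin (ν₂ - r₁)) y3 + -((indMap 𝕜 0 1).compLeft (Fin (ν₂ - r₁)) 0),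
          (indMap 𝕜 0 1).compLeft (Fin (ν₃ - r₁)) 0 + -((indMap 𝕜 1 1).compLeft (Fin (ν₃ - r₁)) (-y4)),
          (indMap 𝕜 1 1).compLeft (Fin r₁) y5 + -((indMap 𝕜 1 1).compLeft (Fin r₁) 0)) = (y1, 0, y3, y4, y5)
        simp only [map_zero, neg_zero, add_zero, zero_add, compLeft_indMap_one_one, neg_neg]
        rw [Subsingleton.elim (α := Fin (ν₁ - r₁) → Fin 0 → 𝕜) y1 0]
        refine Prod.ext rfl (Prod.ext rfl (Prod.ext ?_ (Prod.ext ?_ ?_)))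
        · exact compLeft_indMap_one_one _ y3
        · have h4 := compLeft_indMap_one_one (𝕜 := 𝕜) (ν₃ - r₁) (-(y4 : Fin (ν₃ - r₁) → Fin 1 → 𝕜))
          exact (congrArg Neg.neg h4).trans (neg_neg _)
        · exact compLeft_indMap_one_one _ y5
    · intro y
      exact ⟨⟨0, y, 0, 0, 0⟩, rfl⟩
    · show Module.finrank 𝕜 ((Fin (ν₁-r₁) → Fin 0 → 𝕜) × ((Fin (ν₄-r₂) → Fin 1 → 𝕜) ×
        ((Fin (ν₂-r₁) → Fin 1 → 𝕜) × ((Fin (ν₃-r₁) → Fin 1 → 𝕜) × (Fin r₁ → Fin 1 → 𝕜))))) = (ν₄ - r₂) + r₂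
      simp [Module.finrank_prod, Module.finrank_pi_fintype]; omega
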